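/- Fix c ∈ (0, 1/2), an integer m ≥ 1, and μ₁, μ₂ ∈ [0,1] with μ₂ ≥ μ₁ + c. Let f : {0,1}^m → [0, m] be coordinatewise non-decreasing with f(0,…,0) = 0 < f(1,…,1). Let r⁽¹⁾ and r⁽²⁾ be random vectors with i.i.d. Bernoulli(μ₁) and Bernoulli(μ₂) coordinates respectively. Then E[f(r⁽²⁾)] − E[f(r⁽¹⁾)] ≥ c^{2m} · (f(1,…,1) − f(0,…,0)). -/

import Mathlib

open MeasureTheory Finset

private lemma bern_exp (m : ℕ) (μ : ℝ) (h0 : 0 ≤ μ) (h1 : μ ≤ 1)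
    (f : (Fin m → Bool) → ℝ) :
    (∫ r, f r ∂(Measure.pi (fun _ : Fin m =>
        (PMF.bernoulli (Real.toNNReal μ)
          (Real.toNNReal_le_one.mpr h1)).toMeasure)))
    = ∑ x : Fin m → Bool, (∏ i, (if x i then μ else 1 - μ)) * f x := by
  rw [integral_fintype (Integrable.of_finite)]
  refine Finset.sum_congr rfl fun x _ => ?_
  rw [smul_eq_mul]
  congr 1
  rw [Measure.real]
  have hsing : ({x} : Set (Fin m → Bool)) = Set.univ.pi (fun i => {x i}) :=
    (Set.univ_pi_singleton x).symm
  rw [hsing, Measure.pi_pi]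
  have : ∀ i : Fin m,
      ((PMF.bernoulli (Real.toNNReal μ) (Real.toNNReal_le_one.mpr h1)).toMeasure
        ({x i} : Set Bool)) = ENNReal.ofReal (if x i then μ else 1 - μ) := by
    intro i
    rw [PMF.toMeasure_apply_singleton _ _ (measurableSet_singleton _),
      PMF.bernoulli_apply]
    cases hx : x i
    · simp only [Bool.cond_false, if_neg Bool.false_ne_true]
      rw [ENNReal.ofReal_sub _ h0, ENNReal.ofReal_one, ENNReal.coe_sub, ENNReal.coe_one,
        ENNReal.ofReal]
    · simp [Bool.cond_true, ENNReal.ofReal]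
  simp_rw [this]
  rw [ENNReal.toReal_prod]
  refine Finset.prod_congr rfl fun i _ => ?_
  rw [ENNReal.toReal_ofReal]
  split <;> linarith

theorem stmt_5 (m : ℕ) (hm : 1 ≤ m) (c μ₁ μ₂ : ℝ) (hc : c ∈ Set.Ioo (0 : ℝ) (1 / 2))
    (h₁ : μ₁ ∈ Set.Icc (0 : ℝ) 1) (h₂ : μ₂ ∈ Set.Icc (0 : ℝ) 1) (hgap : μ₂ ≥ μ₁ + c)
    (f : (Fin m → Bool) → ℝ) (hmono : Monotone f)
    (hrange : ∀ x, f x ∈ Set.Icc (0 : ℝ) m)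
    (hbot : f (fun _ => false) = 0) (htop : 0 < f (fun _ => true)) :
    (∫ r, f r ∂(Measure.pi (fun _ : Fin m =>
        (PMF.bernoulli (Real.toNNReal μ₂)
          (Real.toNNReal_le_one.mpr h₂.2)).toMeasure)))
      - (∫ r, f r ∂(Measure.pi (fun _ : Fin m =>
        (PMF.bernoulli (Real.toNNReal μ₁)
          (Real.toNNReal_le_one.mpr h₁.2)).toMeasure)))
      ≥ c ^ (2 * m) * (f (fun _ => true) - f (fun _ => false)) := by
  obtain ⟨hc0, hc12⟩ := hc
  obtain ⟨h10, h11⟩ := h₁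
  obtain ⟨h20, h21⟩ := h₂
  -- coupling weights on Bool × Bool
  set q : Bool → Bool → ℝ := fun a b =>
    if a then (if b then μ₁ else 0) else (if b then μ₂ - μ₁ else 1 - μ₂) with hq
  have hqnn : ∀ a b, 0 ≤ q a b := by
    intro a b; cases a <;> cases b <;> simp [hq] <;> linarith
  -- marginals of q
  have hq1 : ∀ a : Bool, (∑ b : Bool, q a b) = (if a then μ₁ else 1 - μ₁) := by
    intro a; cases a <;> simp [hq] <;> ring
  have hq2 : ∀ b : Bool, (∑ a : Bool, q a b) = (if b then μ₂ else 1 - μ₂) := by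
    intro b; cases b <;> simp [hq] <;> ring
  rw [bern_exp m μ₂ h20 h21 f, bern_exp m μ₁ h10 h11 f]
  -- rewrite the difference as double sum of coupling terms
  have key : (∑ x : Fin m → Bool, (∏ i, (if x i then μ₂ else 1 - μ₂)) * f x)
      - (∑ x : Fin m → Bool, (∏ i, (if x i then μ₁ else 1 - μ₁)) * f x)
      = ∑ a : Fin m → Bool, ∑ b : Fin m → Bool,
          (∏ i, q (a i) (b i)) * (f b - f a) := by
    have m1 : ∀ a : Fin m → Bool,
        (∑ b : Fin m → Bool, ∏ i, q (a i) (b i)) = ∏ i, (if a i then μ₁ else 1 - μ₁) := by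
      intro a
      have h := Finset.prod_univ_sum (fun _ : Fin m => (Finset.univ : Finset Bool))
        (fun i v => q (a i) v)
      rw [Fintype.piFinset_univ] at h
      rw [← h]
      exact Finset.prod_congr rfl fun i _ => hq1 (a i)
    have m2 : ∀ b : Fin m → Bool,
        (∑ a : Fin m → Bool, ∏ i, q (a i) (b i)) = ∏ i, (if b i then μ₂ else 1 - μ₂) := by
      intro b
      have h := Finset.prod_univ_sum (fun _ : Fin m => (Finset.univ : Finset Bool))
        (fun i v => q v (b i))
      rw [Fintype.piFinset_univ] at h
      rw [← h]
      exact Finset.prod_congr rfl fun i _ => hq2 (b i)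
    simp_rw [mul_sub]
    simp only [Finset.sum_sub_distrib]
    congr 1
    · rw [Finset.sum_comm]
      refine Finset.sum_congr rfl fun b _ => ?_
      rw [← Finset.sum_mul, m2 b]
    · refine Finset.sum_congr rfl fun a _ => ?_
      rw [← Finset.sum_mul, m1 a]
  rw [key]
  -- each coupling term is nonnegative
  have hterm : ∀ a b : Fin m → Bool, 0 ≤ (∏ i, q (a i) (b i)) * (f b - f a) := by
    intro a b
    by_cases hab : ∀ i, a i ≤ b i
    · have : a ≤ b := hab
      have := hmono this
      have hp : 0 ≤ ∏ i, q (a i) (b i) := Finset.prod_nonneg fun i _ => hqnn _ _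
      nlinarith
    · push_neg at hab
      obtain ⟨i, hi⟩ := hab
      obtain ⟨hbi, hai⟩ := Bool.lt_iff.mp hi
      have : q (a i) (b i) = 0 := by simp [hq, hai, hbi]
      rw [Finset.prod_eq_zero (Finset.mem_univ i) this, zero_mul]
  -- lower bound by the (all-false, all-true) term
  have hmain : (∏ i : Fin m, q ((fun _ => false) i) ((fun _ => true) i))
      * (f (fun _ => true) - f (fun _ => false))
      ≤ ∑ a : Fin m → Bool, ∑ b : Fin m → Bool, (∏ i, q (a i) (b i)) * (f b - f a) := by
    calc (∏ i : Fin m, q ((fun _ => false) i) ((fun _ => true) i))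
        * (f (fun _ => true) - f (fun _ => false))
        ≤ ∑ b : Fin m → Bool, (∏ i, q ((fun _ => false) i) (b i)) * (f b - f (fun _ => false)) :=
          Finset.single_le_sum
            (f := fun b => (∏ i, q ((fun _ => false) i) (b i)) * (f b - f (fun _ => false)))
            (fun b _ => hterm _ b) (Finset.mem_univ (fun _ => true))
      _ ≤ ∑ a : Fin m → Bool, ∑ b : Fin m → Bool, (∏ i, q (a i) (b i)) * (f b - f a) :=
          Finset.single_le_sum
            (f := fun a => ∑ b : Fin m → Bool, (∏ i, q (a i) (b i)) * (f b - f a))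
            (fun a _ => Finset.sum_nonneg fun b _ => hterm a b)
            (Finset.mem_univ (fun _ => false))
  refine le_trans ?_ hmain
  have hqft : q false true = μ₂ - μ₁ := by simp [hq]
  simp only [hqft]
  rw [Finset.prod_const, Finset.card_univ, Fintype.card_fin]
  have hf0 : 0 ≤ f (fun _ => true) - f (fun _ => false) := by
    rw [hbot]; linarith
  refine mul_le_mul_of_nonneg_right ?_ hf0
  calc c ^ (2 * m) ≤ c ^ m := by
        apply pow_le_pow_of_le_one (le_of_lt hc0) (by linarith) (by omega)
    _ ≤ (μ₂ - μ₁) ^ m := pow_le_pow_left₀ (le_of_lt hc0) (by linarith) m
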